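/- The 4-dimensional algebra over a field k of characteristic zero with basis {e, e₁, e₂, e*} and nonzero products e·e = e + 2e₂ + s·e*, e·e* = -2e*, e*·e = e*, e·e₁ = 2e₁ - 4e*, e·e₂ = -e₂, e₁·e = -e₁ + 2e*, e₂·e = -e₂, e₁·e₂ = e₁ - e*, e₂·e₁ = -2e₁ + 2e*, e₂·e₂ = e₂, together with the symmetric bilinear form B with B(e,e*) = B(e₁,e₂) = 1, B(e,e) = -s, and all other pairings of basis elements zero, is a quadratic Novikov algebra (for any scalar s). -/

import Mathlib

set_option maxHeartbeats 2000000 in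
/-- The 4-dimensional algebra with basis {e, e₁, e₂, e*} (here b 0 = e,
b 1 = e₁, b 2 = e₂, b 3 = e*), the listed products and the bilinear form with
B(e,e*) = B(e₁,e₂) = 1, B(e,e) = -s and all other pairings zero, is a quadratic
Novikov algebra. -/
theorem four_dim_double_extension_quadratic_novikov
    {k A : Type*} [Field k] [CharZero k] [AddCommGroup A] [Module k A]
    (mul : A →ₗ[k] A →ₗ[k] A) (B : LinearMap.BilinForm k A)
    (b : Module.Basis (Fin 4) k A) (s : k)
    (m00 : mul (b 0) (b 0) = b 0 + (2 : k) • b 2 + s • b 3)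
    (m01 : mul (b 0) (b 1) = (2 : k) • b 1 - (4 : k) • b 3)
    (m02 : mul (b 0) (b 2) = -b 2)
    (m03 : mul (b 0) (b 3) = (-2 : k) • b 3)
    (m10 : mul (b 1) (b 0) = -b 1 + (2 : k) • b 3)
    (m11 : mul (b 1) (b 1) = 0)
    (m12 : mul (b 1) (b 2) = b 1 - b 3)
    (m13 : mul (b 1) (b 3) = 0)
    (m20 : mul (b 2) (b 0) = -b 2)
    (m21 : mul (b 2) (b 1) = (-2 : k) • b 1 + (2 : k) • b 3)
    (m22 : mul (b 2) (b 2) = b 2)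
    (m23 : mul (b 2) (b 3) = 0)
    (m30 : mul (b 3) (b 0) = b 3)
    (m31 : mul (b 3) (b 1) = 0)
    (m32 : mul (b 3) (b 2) = 0)
    (m33 : mul (b 3) (b 3) = 0)
    (B00 : B (b 0) (b 0) = -s)
    (B01 : B (b 0) (b 1) = 0) (B02 : B (b 0) (b 2) = 0) (B03 : B (b 0) (b 3) = 1)
    (B10 : B (b 1) (b 0) = 0) (B11 : B (b 1) (b 1) = 0)
    (B12 : B (b 1) (b 2) = 1) (B13 : B (b 1) (b 3) = 0)
    (B20 : B (b 2) (b 0) = 0) (B21 : B (b 2) (b 1) = 1)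
    (B22 : B (b 2) (b 2) = 0) (B23 : B (b 2) (b 3) = 0)
    (B30 : B (b 3) (b 0) = 1) (B31 : B (b 3) (b 1) = 0)
    (B32 : B (b 3) (b 2) = 0) (B33 : B (b 3) (b 3) = 0) :
    (∀ x y z, mul (mul x y) z - mul x (mul y z) = mul (mul y x) z - mul y (mul x z)) ∧
    (∀ x y z, mul (mul x y) z = mul (mul x z) y) ∧
    (∀ x y, B x y = B y x) ∧
    (∀ x, (∀ y, B x y = 0) → x = 0) ∧
    (∀ x y z, B (mul x y) z = -(B y (mul x z + mul z x))) := by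

  have decomp : ∀ x : A, ∃ c0 c1 c2 c3 : k,
      x = c0 • b 0 + c1 • b 1 + c2 • b 2 + c3 • b 3 := fun x =>
    ⟨b.repr x 0, b.repr x 1, b.repr x 2, b.repr x 3, by
      conv_lhs => rw [← b.sum_repr x, Fin.sum_univ_four]⟩
  refine ⟨?_, ?_, ?_, ?_, ?_⟩
  · intro x y z
    obtain ⟨x0, x1, x2, x3, hx⟩ := decomp x
    obtain ⟨y0, y1, y2, y3, hy⟩ := decomp y
    obtain ⟨z0, z1, z2, z3, hz⟩ := decomp z
    subst hx hy hz
    simp only [map_add, map_smul, LinearMap.add_apply, LinearMap.smul_apply,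
      m00, m01, m02, m03, m10, m11, m12, m13, m20, m21, m22, m23, m30, m31, m32, m33,
      map_zero, LinearMap.zero_apply, smul_zero, map_neg, LinearMap.neg_apply, map_sub,
      LinearMap.sub_apply]
    module
  · intro x y z
    obtain ⟨x0, x1, x2, x3, hx⟩ := decomp x
    obtain ⟨y0, y1, y2, y3, hy⟩ := decomp y
    obtain ⟨z0, z1, z2, z3, hz⟩ := decomp z
    subst hx hy hz
    simp only [map_add, map_smul, LinearMap.add_apply, LinearMap.smul_apply,
      m00, m01, m02, m03, m10, m11, m12, m13, m20, m21, m22, m23, m30, m31, m32, m33,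
      map_zero, LinearMap.zero_apply, smul_zero, map_neg, LinearMap.neg_apply, map_sub,
      LinearMap.sub_apply]
    module
  · intro x y
    obtain ⟨x0, x1, x2, x3, hx⟩ := decomp x
    obtain ⟨y0, y1, y2, y3, hy⟩ := decomp y
    subst hx hy
    simp only [map_add, map_smul, LinearMap.add_apply, LinearMap.smul_apply,
      B00, B01, B02, B03, B10, B11, B12, B13, B20, B21, B22, B23, B30, B31, B32, B33,
      smul_eq_mul]
    ring
  · intro x hx
    obtain ⟨x0, x1, x2, x3, h⟩ := decomp x
    have e0 := hx (b 0); have e1 := hx (b 1); have e2 := hx (b 2); have e3 := hx (b 3)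
    rw [h] at e0 e1 e2 e3 ⊢
    simp only [map_add, map_smul, LinearMap.add_apply, LinearMap.smul_apply,
      B00, B01, B02, B03, B10, B11, B12, B13, B20, B21, B22, B23, B30, B31, B32, B33,
      smul_eq_mul] at e0 e1 e2 e3
    have hx0 : x0 = 0 := by linear_combination e3
    have hx1 : x1 = 0 := by linear_combination e2
    have hx2 : x2 = 0 := by linear_combination e1
    have hx3 : x3 = 0 := by linear_combination e0 + s * e3
    rw [hx0, hx1, hx2, hx3]
    module
  · intro x y z
    obtain ⟨x0, x1, x2, x3, hx⟩ := decomp x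
    obtain ⟨y0, y1, y2, y3, hy⟩ := decomp y
    obtain ⟨z0, z1, z2, z3, hz⟩ := decomp z
    subst hx hy hz
    simp only [map_add, map_smul, LinearMap.add_apply, LinearMap.smul_apply,
      m00, m01, m02, m03, m10, m11, m12, m13, m20, m21, m22, m23, m30, m31, m32, m33,
      B00, B01, B02, B03, B10, B11, B12, B13, B20, B21, B22, B23, B30, B31, B32, B33,
      map_zero, LinearMap.zero_apply, smul_zero, map_neg, LinearMap.neg_apply, map_sub,
      LinearMap.sub_apply, smul_eq_mul, smul_add, smul_neg, smul_sub]
    ring
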